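/- arXiv:1207.2047 — 3 statements merged into one kernel-verified Lean document; each statement's English description precedes it below -/
import Mathlib

section
/- Let f, g, h be continuous with f(t) ≥ 0, g(t) > 0, g decreasing, h(s,t) ≥ 0 on [0,T], and let y be a non-negative continuous function satisfying y(t) ≤ ∫₀ᵗ (f(s)g(t)y(s)² + h(s,t)) ds for all t ∈ [0,T]. If (sup_{t∈[0,T]} ∫₀ᵗ g(s)²f(s) ds) · (sup_{t∈[0,T]} (1/g(t)) ∫₀ᵗ h(s,t) ds) < 1/4, then y(t) ≤ 2 sup_{τ∈[0,t]} ∫₀^τ h(s,τ) ds for all t ∈ [0,T]. -/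
open intervalIntegral Set

/-- Nonlinear iteration lemma (Lemma 2.2): if a nonnegative continuous `y` satisfies
`y t ≤ ∫₀ᵗ (f s * g t * y s ^ 2 + h s t) ds` with `f ≥ 0`, `g > 0` decreasing, `h ≥ 0`,
and the product of the two suprema is `< 1/4`, then
`y t ≤ 2 * sup_{τ ∈ [0,t]} ∫₀^τ h s τ ds`. -/
theorem nonlinear_iteration
    (T : ℝ) (hT : 0 < T)
    (f g y : ℝ → ℝ) (h : ℝ → ℝ → ℝ)
    (hf : ContinuousOn f (Icc 0 T)) (hg : ContinuousOn g (Icc 0 T))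
    (hh : ContinuousOn (fun p : ℝ × ℝ => h p.1 p.2) (Icc 0 T ×ˢ Icc 0 T))
    (hy : ContinuousOn y (Icc 0 T))
    (hf_nonneg : ∀ t ∈ Icc (0:ℝ) T, 0 ≤ f t)
    (hg_pos : ∀ t ∈ Icc (0:ℝ) T, 0 < g t)
    (hg_anti : AntitoneOn g (Icc 0 T))
    (hh_nonneg : ∀ s ∈ Icc (0:ℝ) T, ∀ t ∈ Icc (0:ℝ) T, 0 ≤ h s t)
    (hy_nonneg : ∀ t ∈ Icc (0:ℝ) T, 0 ≤ y t)
    (hy_ineq : ∀ t ∈ Icc (0:ℝ) T,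
      y t ≤ ∫ s in (0:ℝ)..t, (f s * g t * (y s) ^ 2 + h s t))
    (hAB : (⨆ t : Icc (0:ℝ) T, ∫ s in (0:ℝ)..(t:ℝ), (g s) ^ 2 * f s) *
           (⨆ t : Icc (0:ℝ) T, (1 / g t) * ∫ s in (0:ℝ)..(t:ℝ), h s t) < 1 / 4) :
    ∀ t ∈ Icc (0:ℝ) T,
      y t ≤ 2 * ⨆ τ : Icc (0:ℝ) t, ∫ s in (0:ℝ)..(τ:ℝ), h s (τ:ℝ) := by
  intro t ht
  obtain ⟨ht0, htT⟩ := ht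
  have hsub : Icc (0:ℝ) t ⊆ Icc 0 T := Icc_subset_Icc le_rfl htT
  haveI : Nonempty (Icc (0:ℝ) t) := (nonempty_Icc.2 ht0).to_subtype
  haveI : Nonempty (Icc (0:ℝ) T) := (nonempty_Icc.2 hT.le).to_subtype
  set A := ⨆ τ : Icc (0:ℝ) T, ∫ s in (0:ℝ)..(τ:ℝ), (g s) ^ 2 * f s with hA_def
  set B := ⨆ τ : Icc (0:ℝ) T, (1 / g τ) * ∫ s in (0:ℝ)..(τ:ℝ), h s τ with hB_def
  set Bt := ⨆ τ : Icc (0:ℝ) t, (1 / g τ) * ∫ s in (0:ℝ)..(τ:ℝ), h s τ with hBt_def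
  set Ht := ⨆ τ : Icc (0:ℝ) t, ∫ s in (0:ℝ)..(τ:ℝ), h s (τ:ℝ) with hHt_def
  obtain ⟨C, hC⟩ := (isCompact_Icc.prod isCompact_Icc).exists_bound_of_continuousOn hh
  obtain ⟨G, hG⟩ := isCompact_Icc.exists_bound_of_continuousOn ((hg.pow 2).mul hf)
  have hgt : 0 < g t := hg_pos t ⟨ht0, htT⟩
  have hgT : 0 < g T := hg_pos T ⟨hT.le, le_rfl⟩
  have hgmin : ∀ τ ∈ Icc (0:ℝ) T, g T ≤ g τ := fun τ hτ => hg_anti hτ ⟨hT.le, le_rfl⟩ hτ.2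
  have hconth : ∀ τ ∈ Icc (0:ℝ) T, ContinuousOn (fun s => h s τ) (Icc 0 T) :=
    fun τ hτ => hh.comp ((continuous_id.prodMk continuous_const).continuousOn)
      (fun s hs => mk_mem_prod hs hτ)
  have int_h : ∀ τ ∈ Icc (0:ℝ) T,
      IntervalIntegrable (fun s => h s τ) MeasureTheory.volume 0 τ :=
    fun τ hτ => ContinuousOn.intervalIntegrable_of_Icc hτ.1
      ((hconth τ hτ).mono (Icc_subset_Icc le_rfl hτ.2))
  have int_gf : ∀ τ ∈ Icc (0:ℝ) T,
      IntervalIntegrable (fun s => (g s) ^ 2 * f s) MeasureTheory.volume 0 τ :=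
    fun τ hτ => ContinuousOn.intervalIntegrable_of_Icc hτ.1
      (((hg.pow 2).mul hf).mono (Icc_subset_Icc le_rfl hτ.2))
  have hint_nonneg : ∀ τ ∈ Icc (0:ℝ) T, 0 ≤ ∫ s in (0:ℝ)..τ, h s τ := fun τ hτ =>
    intervalIntegral.integral_nonneg hτ.1
      (fun s hs => hh_nonneg s (Icc_subset_Icc le_rfl hτ.2 hs) τ hτ)
  have hint_le : ∀ τ ∈ Icc (0:ℝ) T, (∫ s in (0:ℝ)..τ, h s τ) ≤ T * C := by
    intro τ hτ
    have h1 : (∫ s in (0:ℝ)..τ, h s τ) ≤ ∫ _s in (0:ℝ)..τ, C := by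
      refine intervalIntegral.integral_mono_on hτ.1 (int_h τ hτ)
        intervalIntegrable_const (fun s hs => ?_)
      have := hC (s, τ) (mk_mem_prod (Icc_subset_Icc le_rfl hτ.2 hs) hτ)
      rw [Real.norm_eq_abs] at this
      exact (le_abs_self _).trans this
    have hC0 : 0 ≤ C := by
      have := hC (0, 0) (mk_mem_prod ⟨le_rfl, hT.le⟩ ⟨le_rfl, hT.le⟩)
      exact (norm_nonneg _).trans this
    rw [intervalIntegral.integral_const, smul_eq_mul] at h1
    nlinarith [hτ.2, hτ.1]
  have hgf_le : ∀ τ ∈ Icc (0:ℝ) T, (∫ s in (0:ℝ)..τ, (g s) ^ 2 * f s) ≤ T * G := by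
    intro τ hτ
    have h1 : (∫ s in (0:ℝ)..τ, (g s) ^ 2 * f s) ≤ ∫ _s in (0:ℝ)..τ, G := by
      refine intervalIntegral.integral_mono_on hτ.1 (int_gf τ hτ)
        intervalIntegrable_const (fun s hs => ?_)
      have := hG s (Icc_subset_Icc le_rfl hτ.2 hs)
      rw [Real.norm_eq_abs] at this
      exact (le_abs_self _).trans this
    have hG0 : 0 ≤ G := (norm_nonneg _).trans (hG 0 ⟨le_rfl, hT.le⟩)
    rw [intervalIntegral.integral_const, smul_eq_mul] at h1
    nlinarith [hτ.2, hτ.1]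
  have bddA : BddAbove (range fun τ : Icc (0:ℝ) T => ∫ s in (0:ℝ)..(τ:ℝ), (g s) ^ 2 * f s) :=
    ⟨T * G, by rintro x ⟨τ, rfl⟩; exact hgf_le τ τ.2⟩
  have bddB : BddAbove (range fun τ : Icc (0:ℝ) T =>
      (1 / g τ) * ∫ s in (0:ℝ)..(τ:ℝ), h s τ) := by
    refine ⟨(1 / g T) * (T * C), ?_⟩
    rintro x ⟨τ, rfl⟩
    exact mul_le_mul (one_div_le_one_div_of_le hgT (hgmin τ τ.2)) (hint_le τ τ.2)
      (hint_nonneg τ τ.2) (by positivity)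
  have bddBt : BddAbove (range fun τ : Icc (0:ℝ) t =>
      (1 / g τ) * ∫ s in (0:ℝ)..(τ:ℝ), h s τ) := by
    refine ⟨(1 / g T) * (T * C), ?_⟩
    rintro x ⟨τ, rfl⟩
    exact mul_le_mul (one_div_le_one_div_of_le hgT (hgmin τ (hsub τ.2)))
      (hint_le τ (hsub τ.2)) (hint_nonneg τ (hsub τ.2)) (by positivity)
  have bddHt : BddAbove (range fun τ : Icc (0:ℝ) t => ∫ s in (0:ℝ)..(τ:ℝ), h s (τ:ℝ)) :=
    ⟨T * C, by rintro x ⟨τ, rfl⟩; exact hint_le τ (hsub τ.2)⟩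
  have hA0 : 0 ≤ A := by
    refine le_trans (le_of_eq ?_) (le_ciSup bddA ⟨0, ⟨le_rfl, hT.le⟩⟩)
    exact (intervalIntegral.integral_same).symm
  have hBt0 : 0 ≤ Bt := by
    have hg0 : 0 < g 0 := hg_pos 0 ⟨le_rfl, hT.le⟩
    refine le_trans ?_ (le_ciSup bddBt ⟨0, ⟨le_rfl, ht0⟩⟩)
    exact mul_nonneg (by positivity) (hint_nonneg 0 ⟨le_rfl, hT.le⟩)
  have hBtB : Bt ≤ B := ciSup_le fun τ => le_ciSup bddB ⟨(τ : ℝ), hsub τ.2⟩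
  have hk : 4 * A * Bt < 1 := by
    nlinarith [mul_le_mul_of_nonneg_left hBtB hA0]
  -- key integral estimate
  have key : ∀ c : ℝ, 0 < c → ∀ τ ∈ Icc (0:ℝ) t, (∀ σ ∈ Icc (0:ℝ) τ, y σ ≤ c * g σ) →
      y τ ≤ (A * c ^ 2 + Bt) * g τ := by
    intro c hc τ hτ hbound
    have hτT : τ ∈ Icc (0:ℝ) T := hsub hτ
    have hτ0 : (0:ℝ) ≤ τ := hτ.1
    have hgτ : 0 < g τ := hg_pos τ hτT
    have hsubτ : Icc (0:ℝ) τ ⊆ Icc 0 T := Icc_subset_Icc le_rfl hτT.2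
    have h1 : y τ ≤ ∫ s in (0:ℝ)..τ, (f s * g τ * (y s) ^ 2 + h s τ) := hy_ineq τ hτT
    have contL : ContinuousOn (fun s => f s * g τ * (y s) ^ 2 + h s τ) (Icc 0 τ) :=
      (((hf.mono hsubτ).mul continuousOn_const).mul ((hy.mono hsubτ).pow 2)).add
        ((hconth τ hτT).mono hsubτ)
    have contR : ContinuousOn (fun s => (g τ * c ^ 2) * ((g s) ^ 2 * f s) + h s τ)
        (Icc 0 τ) :=
      (continuousOn_const.mul (((hg.mono hsubτ).pow 2).mul (hf.mono hsubτ))).add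
        ((hconth τ hτT).mono hsubτ)
    have intL := contL.intervalIntegrable_of_Icc (μ := MeasureTheory.volume) hτ0
    have intR := contR.intervalIntegrable_of_Icc (μ := MeasureTheory.volume) hτ0
    have h2 : (∫ s in (0:ℝ)..τ, (f s * g τ * (y s) ^ 2 + h s τ)) ≤
        ∫ s in (0:ℝ)..τ, ((g τ * c ^ 2) * ((g s) ^ 2 * f s) + h s τ) := by
      refine intervalIntegral.integral_mono_on hτ0 intL intR (fun s hs => ?_)
      have hsT : s ∈ Icc (0:ℝ) T := hsubτ hs
      have h3 : y s ≤ c * g s := hbound s hs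
      have h4 : 0 ≤ y s := hy_nonneg s hsT
      have h5 : 0 ≤ f s := hf_nonneg s hsT
      have h6 : 0 < g s := hg_pos s hsT
      have h7 : (y s) ^ 2 ≤ c ^ 2 * (g s) ^ 2 := by nlinarith
      nlinarith [mul_le_mul_of_nonneg_left h7 (mul_nonneg h5 hgτ.le)]
    have h8 : (∫ s in (0:ℝ)..τ, ((g τ * c ^ 2) * ((g s) ^ 2 * f s) + h s τ)) =
        (g τ * c ^ 2) * (∫ s in (0:ℝ)..τ, (g s) ^ 2 * f s) + ∫ s in (0:ℝ)..τ, h s τ := by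
      rw [intervalIntegral.integral_add ((int_gf τ hτT).const_mul _) (int_h τ hτT),
        intervalIntegral.integral_const_mul]
    have h9 : (∫ s in (0:ℝ)..τ, (g s) ^ 2 * f s) ≤ A := le_ciSup bddA ⟨τ, hτT⟩
    have h10 : (∫ s in (0:ℝ)..τ, h s τ) ≤ Bt * g τ := by
      have h11 : (1 / g τ) * (∫ s in (0:ℝ)..τ, h s τ) ≤ Bt := le_ciSup bddBt ⟨τ, hτ⟩
      rw [one_div, inv_mul_eq_div] at h11
      exact (div_le_iff₀ hgτ).mp h11
    have h12 : (g τ * c ^ 2) * (∫ s in (0:ℝ)..τ, (g s) ^ 2 * f s) ≤ (g τ * c ^ 2) * A :=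
      mul_le_mul_of_nonneg_left h9 (by positivity)
    calc y τ ≤ _ := h1
      _ ≤ _ := h2
      _ = _ := h8
      _ ≤ (g τ * c ^ 2) * A + Bt * g τ := add_le_add h12 h10
      _ = (A * c ^ 2 + Bt) * g τ := by ring
  -- bootstrap
  set ε₀ := (1 - 4 * A * Bt) / (2 * (A + 1)) with hε₀_def
  have hε₀pos : 0 < ε₀ := div_pos (by linarith) (by linarith)
  have hy0 : y 0 = 0 := by
    have h1 := hy_ineq 0 ⟨le_rfl, hT.le⟩
    rw [intervalIntegral.integral_same] at h1
    exact le_antisymm h1 (hy_nonneg 0 ⟨le_rfl, hT.le⟩)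
  have main : ∀ ε : ℝ, 0 < ε → ε ≤ ε₀ → y t ≤ (2 * Bt + ε) * g t := by
    intro ε hε hεle
    set c := 2 * Bt + ε with hc_def
    have hc : 0 < c := by rw [hc_def]; linarith
    have h2A : ε * (2 * (A + 1)) ≤ 1 - 4 * A * Bt := by
      rw [hε₀_def, le_div_iff₀ (by linarith : (0:ℝ) < 2 * (A + 1))] at hεle
      linarith
    have hquad : A * c ^ 2 + Bt < c := by
      rw [hc_def]
      nlinarith [mul_nonneg hBt0 (by linarith : (0:ℝ) ≤ 1 - 4 * A * Bt),
        mul_nonneg hε.le (sub_nonneg.2 h2A),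
        mul_nonneg hA0 (sq_nonneg ε), mul_pos hε hε]
    have hstrict : ∀ τ ∈ Icc (0:ℝ) t, (∀ σ ∈ Icc (0:ℝ) τ, y σ ≤ c * g σ) →
        y τ < c * g τ := fun τ hτ hb =>
      lt_of_le_of_lt (key c hc τ hτ hb)
        (mul_lt_mul_of_pos_right hquad (hg_pos τ (hsub hτ)))
    set S := {τ : ℝ | τ ∈ Icc (0:ℝ) t ∧ ∀ σ ∈ Icc (0:ℝ) τ, y σ ≤ c * g σ} with hS_def
    have h0S : (0:ℝ) ∈ S := by
      refine ⟨⟨le_rfl, ht0⟩, fun σ hσ => ?_⟩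
      have hσ0 : σ = 0 := le_antisymm hσ.2 hσ.1
      rw [hσ0, hy0]
      exact (mul_pos hc (hg_pos 0 ⟨le_rfl, hT.le⟩)).le
    have hSne : S.Nonempty := ⟨0, h0S⟩
    have hSbdd : BddAbove S := ⟨t, fun τ hτ => hτ.1.2⟩
    set r := sSup S with hr_def
    have hr0 : 0 ≤ r := le_csSup hSbdd h0S
    have hrt : r ≤ t := csSup_le hSne (fun τ hτ => hτ.1.2)
    have hrT : r ∈ Icc (0:ℝ) T := ⟨hr0, hrt.trans htT⟩
    have hlt : ∀ σ : ℝ, 0 ≤ σ → σ < r → y σ ≤ c * g σ := by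
      intro σ hσ0 hσr
      obtain ⟨τ, hτS, hστ⟩ := exists_lt_of_lt_csSup hSne hσr
      exact hτS.2 σ ⟨hσ0, hστ.le⟩
    have hbr_r : y r ≤ c * g r := by
      rcases eq_or_lt_of_le hr0 with h0r | hrpos
      · rw [← h0r, hy0]
        exact (mul_pos hc (hg_pos 0 ⟨le_rfl, hT.le⟩)).le
      · have hcw : ContinuousWithinAt (fun x => y x - c * g x) (Ico 0 r) r :=
          ((hy.sub (continuousOn_const.mul hg)) r hrT).mono
            (fun x hx => ⟨hx.1, hx.2.le.trans hrT.2⟩)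
        haveI hne : (nhdsWithin r (Ico (0:ℝ) r)).NeBot := by
          apply mem_closure_iff_nhdsWithin_neBot.mp
          rw [closure_Ico hrpos.ne]
          exact ⟨hr0, le_rfl⟩
        have h1 : y r - c * g r ≤ 0 :=
          le_of_tendsto hcw (eventually_nhdsWithin_of_forall
            (fun σ hσ => sub_nonpos.mpr (hlt σ hσ.1 hσ.2)))
        linarith
    have hbr : ∀ σ ∈ Icc (0:ℝ) r, y σ ≤ c * g σ := by
      intro σ hσ
      rcases lt_or_eq_of_le hσ.2 with h' | h'
      · exact hlt σ hσ.1 h'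
      · rw [h']; exact hbr_r
    have hreqt : r = t := by
      by_contra hne'
      have hrlt : r < t := lt_of_le_of_ne hrt hne'
      have hyr : y r < c * g r := hstrict r ⟨hr0, hrt⟩ hbr
      have hcw : ContinuousWithinAt (fun x => y x - c * g x) (Icc 0 t) r :=
        ((hy.sub (continuousOn_const.mul hg)) r hrT).mono
          (fun x hx => ⟨hx.1, hx.2.trans htT⟩)
      have hev : {x : ℝ | y x - c * g x < 0} ∈ nhdsWithin r (Icc (0:ℝ) t) := by
        have : Iio (0:ℝ) ∈ nhds (y r - c * g r) := Iio_mem_nhds (by linarith)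
        exact hcw this
      rw [Metric.mem_nhdsWithin_iff] at hev
      obtain ⟨η, hη, hball⟩ := hev
      set r' := min t (r + η / 2) with hr'_def
      have hr'r : r < r' := lt_min hrlt (by linarith)
      have hr'S : r' ∈ S := by
        refine ⟨⟨hr0.trans hr'r.le, min_le_left _ _⟩, fun σ hσ => ?_⟩
        rcases le_or_gt σ r with h' | h'
        · exact hbr σ ⟨hσ.1, h'⟩
        · have hσt : σ ∈ Icc (0:ℝ) t := ⟨hσ.1, hσ.2.trans (min_le_left _ _)⟩
          have hσr' : σ ≤ r + η / 2 := hσ.2.trans (min_le_right _ _)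
          have hmem : σ ∈ Metric.ball r η ∩ Icc (0:ℝ) t := by
            refine ⟨?_, hσt⟩
            rw [Metric.mem_ball, Real.dist_eq, abs_of_pos (by linarith)]
            linarith
          have := hball hmem
          simp only [mem_setOf_eq] at this
          linarith
      exact absurd (le_csSup hSbdd hr'S) (not_le.mpr hr'r)
    have hfin : y t < c * g t := by
      rw [← hreqt]
      exact hstrict r ⟨hr0, hrt⟩ hbr
    exact hfin.le
  -- conclusion
  have hBtHt : Bt * g t ≤ Ht := by
    have h1 : Bt ≤ Ht / g t := by
      refine ciSup_le (fun τ => ?_)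
      have hτT : (τ : ℝ) ∈ Icc (0:ℝ) T := hsub τ.2
      have hgτ : 0 < g τ := hg_pos τ hτT
      have hgτt : g t ≤ g τ := hg_anti hτT ⟨ht0, htT⟩ τ.2.2
      have hI0 : 0 ≤ ∫ s in (0:ℝ)..(τ:ℝ), h s (τ:ℝ) := hint_nonneg τ hτT
      have hIHt : (∫ s in (0:ℝ)..(τ:ℝ), h s (τ:ℝ)) ≤ Ht := le_ciSup bddHt τ
      calc (1 / g τ) * (∫ s in (0:ℝ)..(τ:ℝ), h s (τ:ℝ))
          ≤ (1 / g t) * (∫ s in (0:ℝ)..(τ:ℝ), h s (τ:ℝ)) :=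
            mul_le_mul_of_nonneg_right (one_div_le_one_div_of_le hgt hgτt) hI0
        _ ≤ (1 / g t) * Ht := mul_le_mul_of_nonneg_left hIHt (by positivity)
        _ = Ht / g t := one_div_mul_eq_div _ _
    exact (le_div_iff₀ hgt).mp h1
  refine le_of_forall_pos_le_add (fun ε hε => ?_)
  have hε' : 0 < min ε₀ (ε / g t) := lt_min hε₀pos (div_pos hε hgt)
  have h1 := main _ hε' (min_le_left _ _)
  have h2 : min ε₀ (ε / g t) * g t ≤ ε := by
    calc min ε₀ (ε / g t) * g t ≤ (ε / g t) * g t :=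
          mul_le_mul_of_nonneg_right (min_le_right _ _) hgt.le
      _ = ε := div_mul_cancel₀ _ hgt.ne'
  have h3 : (2 * Bt + min ε₀ (ε / g t)) * g t = 2 * (Bt * g t) + min ε₀ (ε / g t) * g t := by
    ring
  rw [h3] at h1
  linarith
end

section
/- Let u ∈ C²([−ℓ,ℓ]) be an eigenfunction of L u = ε u'' − (a u)' with Dirichlet boundary conditions u(±ℓ) = 0, relative to eigenvalue λ, and assume u > 0 on (−ℓ,ℓ) with ∫_{−ℓ}^{ℓ} u dx = 1. Then λ = ε(u'(ℓ) − u'(−ℓ)), and consequently λ < 0 (since u'(ℓ) ≤ 0 ≤ u'(−ℓ) and u'(ℓ) < u'(−ℓ) because u is positive in the interior and vanishes at both endpoints). -/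
open Set intervalIntegral Filter Topology

/-- For a positive normalized Dirichlet eigenfunction of `L u = ε u'' - (a u)'`,
the eigenvalue equals `ε (u'(ℓ) - u'(-ℓ))` and is negative. -/
theorem first_eigenvalue_negative
    (ℓ ε : ℝ) (hℓ : 0 < ℓ) (hε : 0 < ε)
    (a u : ℝ → ℝ) (lam : ℝ)
    (ha : ContDiff ℝ 1 a) (hu : ContDiff ℝ 2 u)
    (heq : ∀ x ∈ Ioo (-ℓ) ℓ,
      ε * deriv (deriv u) x - deriv (fun y => a y * u y) x = lam * u x)
    (hbcL : u (-ℓ) = 0) (hbcR : u ℓ = 0)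
    (hpos : ∀ x ∈ Ioo (-ℓ) ℓ, 0 < u x)
    (hnorm : (∫ x in (-ℓ)..ℓ, u x) = 1) :
    lam = ε * (deriv u ℓ - deriv u (-ℓ)) ∧ lam < 0 := by
  have hlt : -ℓ < ℓ := by linarith
  have hle : -ℓ ≤ ℓ := hlt.le
  -- basic regularity
  have hud : Differentiable ℝ u := hu.differentiable two_ne_zero
  have hu1 : ContDiff ℝ 1 (deriv u) := by
    have : ContDiff ℝ (1 + 1) u := by exact_mod_cast hu
    exact (contDiff_succ_iff_deriv.mp this).2.2
  have hud1 : Differentiable ℝ (deriv u) := hu1.differentiable one_ne_zero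
  have huc : Continuous u := hud.continuous
  have hu'c : Continuous (deriv u) := hud1.continuous
  have hu''c : Continuous (deriv (deriv u)) := hu1.continuous_deriv le_rfl
  have hau : ContDiff ℝ 1 (fun y => a y * u y) := ha.mul (hu.of_le one_le_two)
  have haud : Differentiable ℝ (fun y => a y * u y) := hau.differentiable one_ne_zero
  have hau'c : Continuous (deriv (fun y => a y * u y)) := hau.continuous_deriv le_rfl
  -- the PDE holds on all of Icc by continuity
  have heqIcc : ∀ x ∈ Icc (-ℓ) ℓ,
      ε * deriv (deriv u) x - deriv (fun y => a y * u y) x = lam * u x := by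
    have hf : Continuous (fun x => ε * deriv (deriv u) x
        - deriv (fun y => a y * u y) x - lam * u x) := by
      continuity
    have h0 : Set.EqOn (fun x => ε * deriv (deriv u) x
        - deriv (fun y => a y * u y) x - lam * u x) (fun _ => (0:ℝ)) (Ioo (-ℓ) ℓ) := by
      intro x hx
      have := heq x hx
      simp only
      linarith
    have hcl : Set.EqOn (fun x => ε * deriv (deriv u) x
        - deriv (fun y => a y * u y) x - lam * u x) (fun _ => (0:ℝ)) (closure (Ioo (-ℓ) ℓ)) :=
      h0.closure hf continuous_const
    rw [closure_Ioo hlt.ne] at hcl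
    intro x hx
    have := hcl hx
    simp only at this
    linarith
  -- Part 1: integrate the equation
  have key : lam = ε * (deriv u ℓ - deriv u (-ℓ)) := by
    have hcongr : (∫ x in (-ℓ)..ℓ, (ε * deriv (deriv u) x - deriv (fun y => a y * u y) x))
        = ∫ x in (-ℓ)..ℓ, lam * u x := by
      apply intervalIntegral.integral_congr
      intro x hx
      rw [uIcc_of_le hle] at hx
      exact heqIcc x hx
    have hi1 : (∫ x in (-ℓ)..ℓ, deriv (deriv u) x) = deriv u ℓ - deriv u (-ℓ) := by
      apply intervalIntegral.integral_deriv_eq_sub (fun x _ => hud1 x)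
      exact hu''c.intervalIntegrable _ _
    have hi2 : (∫ x in (-ℓ)..ℓ, deriv (fun y => a y * u y) x)
        = a ℓ * u ℓ - a (-ℓ) * u (-ℓ) := by
      apply intervalIntegral.integral_deriv_eq_sub (fun x _ => haud x)
      exact hau'c.intervalIntegrable _ _
    have hsub : (∫ x in (-ℓ)..ℓ, (ε * deriv (deriv u) x - deriv (fun y => a y * u y) x))
        = ε * (∫ x in (-ℓ)..ℓ, deriv (deriv u) x)
          - ∫ x in (-ℓ)..ℓ, deriv (fun y => a y * u y) x := by
      rw [intervalIntegral.integral_sub (f := fun x => ε * deriv (deriv u) x) ((continuous_const.mul hu''c).intervalIntegrable _ _)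
        (hau'c.intervalIntegrable _ _), intervalIntegral.integral_const_mul]
    have hr : (∫ x in (-ℓ)..ℓ, lam * u x) = lam := by
      rw [intervalIntegral.integral_const_mul, hnorm, mul_one]
    rw [hr, hsub, hi1, hi2, hbcL, hbcR] at hcongr
    rw [← hcongr]; ring
  refine ⟨key, ?_⟩
  -- sign of the derivatives at the endpoints
  have hsR : deriv u ℓ ≤ 0 := by
    have hd : HasDerivWithinAt u (deriv u ℓ) (Ioo (-ℓ) ℓ) ℓ :=
      (hud ℓ).hasDerivAt.hasDerivWithinAt
    have hslope := hasDerivWithinAt_iff_tendsto_slope.mp hd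
    haveI : (𝓝[Ioo (-ℓ) ℓ \ {ℓ}] ℓ).NeBot := by
      rw [Set.diff_singleton_eq_self (by simp)]
      exact right_nhdsWithin_Ioo_neBot hlt
    refine le_of_tendsto hslope ?_
    filter_upwards [self_mem_nhdsWithin] with x hx
    have hx' : x ∈ Ioo (-ℓ) ℓ := hx.1
    have : slope u ℓ x = u x / (x - ℓ) := by
      rw [slope_def_field, hbcR]; ring
    rw [this]
    exact le_of_lt (div_neg_of_pos_of_neg (hpos x hx') (by linarith [hx'.2]))
  have hsL : 0 ≤ deriv u (-ℓ) := by
    have hd : HasDerivWithinAt u (deriv u (-ℓ)) (Ioo (-ℓ) ℓ) (-ℓ) :=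
      (hud (-ℓ)).hasDerivAt.hasDerivWithinAt
    have hslope := hasDerivWithinAt_iff_tendsto_slope.mp hd
    haveI : (𝓝[Ioo (-ℓ) ℓ \ {-ℓ}] (-ℓ)).NeBot := by
      rw [Set.diff_singleton_eq_self (by simp)]
      exact left_nhdsWithin_Ioo_neBot hlt
    refine ge_of_tendsto hslope ?_
    filter_upwards [self_mem_nhdsWithin] with x hx
    have hx' : x ∈ Ioo (-ℓ) ℓ := hx.1
    have : slope u (-ℓ) x = u x / (x + ℓ) := by
      rw [slope_def_field, hbcL]; ring_nf
    rw [this]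
    exact le_of_lt (div_pos (hpos x hx') (by linarith [hx'.1]))
  have hlam_le : lam ≤ 0 := by
    rw [key]
    have : deriv u ℓ - deriv u (-ℓ) ≤ 0 := by linarith
    exact mul_nonpos_of_nonneg_of_nonpos hε.le this
  rcases hlam_le.lt_or_eq with h | h
  · exact h
  exfalso
  -- λ = 0: both endpoint derivatives vanish
  have hprod : deriv u ℓ = deriv u (-ℓ) := by
    have : ε * (deriv u ℓ - deriv u (-ℓ)) = 0 := by rw [← key, h]
    have := (mul_eq_zero.mp this).resolve_left hε.ne'
    linarith
  have hdR : deriv u ℓ = 0 := le_antisymm hsR (hprod ▸ hsL)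
  have hdL : deriv u (-ℓ) = 0 := by rw [← hprod, hdR]
  -- the function g = ε u' - a u is constant on Ioo
  set g : ℝ → ℝ := fun x => ε * deriv u x - a x * u x with hg_def
  have hgc : Continuous g := by
    apply Continuous.sub (continuous_const.mul hu'c) (ha.continuous.mul huc)
  have hgderiv : ∀ x : ℝ, HasDerivAt g
      (ε * deriv (deriv u) x - deriv (fun y => a y * u y) x) x := by
    intro x
    exact (((hud1 x).hasDerivAt).const_mul ε).sub (haud x).hasDerivAt
  have hgzero : ∀ x ∈ Ioo (-ℓ) ℓ, HasDerivAt g 0 x := by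
    intro x hx
    have h1 := hgderiv x
    have h2 := heq x hx
    rw [h2, h] at h1
    simpa using h1
  have hconst : ∀ x ∈ Ioo (-ℓ) ℓ, g x = g 0 := by
    intro x hx
    have h0mem : (0:ℝ) ∈ Ioo (-ℓ) ℓ := ⟨by linarith, hℓ⟩
    rcases le_total x 0 with hx0 | hx0
    · have := constant_of_has_deriv_right_zero (f := g) (a := x) (b := 0)
        hgc.continuousOn (fun y hy => by
          have : y ∈ Ioo (-ℓ) ℓ := ⟨lt_of_lt_of_le hx.1 hy.1, hy.2.trans hℓ⟩
          exact (hgzero y this).hasDerivWithinAt)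
      exact (this 0 ⟨hx0, le_refl 0⟩).symm
    · have := constant_of_has_deriv_right_zero (f := g) (a := 0) (b := x)
        hgc.continuousOn (fun y hy => by
          have : y ∈ Ioo (-ℓ) ℓ := ⟨by linarith [hy.1], hy.2.trans hx.2⟩
          exact (hgzero y this).hasDerivWithinAt)
      exact this x ⟨hx0, le_refl x⟩
  -- take the limit x → -ℓ to get g 0 = g (-ℓ) = 0
  have hg0 : g 0 = 0 := by
    haveI : (𝓝[Ioo (-ℓ) ℓ] (-ℓ)).NeBot := left_nhdsWithin_Ioo_neBot hlt
    have h1 : Filter.Tendsto g (𝓝[Ioo (-ℓ) ℓ] (-ℓ)) (𝓝 (g (-ℓ))) :=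
      (hgc.tendsto (-ℓ)).mono_left nhdsWithin_le_nhds
    have h2 : Filter.Tendsto g (𝓝[Ioo (-ℓ) ℓ] (-ℓ)) (𝓝 (g 0)) := by
      apply Filter.Tendsto.congr' _ tendsto_const_nhds
      filter_upwards [self_mem_nhdsWithin] with x hx
      exact (hconst x hx).symm
    have : g (-ℓ) = g 0 := tendsto_nhds_unique h1 h2
    rw [← this, hg_def]
    simp [hbcL, hdL]
  have hgIcc : ∀ x ∈ Icc (-ℓ) ℓ, g x = 0 := by
    intro x hx
    rcases hx.1.lt_or_eq with h1 | h1
    · rcases hx.2.lt_or_eq with h2 | h2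
      · rw [hconst x ⟨h1, h2⟩, hg0]
      · rw [h2, hg_def]; simp [hbcR, hdR]
    · rw [← h1, hg_def]; simp [hbcL, hdL]
  -- integrating factor: v = u * exp (-A) is constant zero, contradiction
  set A : ℝ → ℝ := fun x => (∫ t in (0:ℝ)..x, a t) / ε with hA_def
  have hA : ∀ x : ℝ, HasDerivAt A (a x / ε) x := by
    intro x
    have : HasDerivAt (fun y => ∫ t in (0:ℝ)..y, a t) (a x) x :=
(ha.continuous.integral_hasStrictDerivAt 0 x).hasDerivAt
    exact this.div_const ε
  set v : ℝ → ℝ := fun x => u x * Real.exp (-(A x)) with hv_def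
  have hvderiv : ∀ x ∈ Icc (-ℓ) ℓ, HasDerivAt v 0 x := by
    intro x hx
    have hd : HasDerivAt v
        (deriv u x * Real.exp (-(A x)) + u x * (Real.exp (-(A x)) * -(a x / ε))) x :=
      ((hud x).hasDerivAt).mul ((hA x).neg.exp)
    have hgx : ε * deriv u x - a x * u x = 0 := hgIcc x hx
    have hval : deriv u x * Real.exp (-(A x)) + u x * (Real.exp (-(A x)) * -(a x / ε)) = 0 := by
      have hd' : deriv u x = a x * u x / ε := by
        field_simp at hgx ⊢
        linarith
      rw [hd']
      field_simp
      ring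
    rwa [hval] at hd
  have hvconst := constant_of_has_deriv_right_zero (f := v) (a := -ℓ) (b := ℓ)
    (huc.mul ((continuous_neg.comp
      (((intervalIntegral.continuous_primitive (fun a b => ha.continuous.intervalIntegrable _ _) 0).div_const ε))).rexp)).continuousOn
    (fun y hy => (hvderiv y ⟨hy.1, hy.2.le⟩).hasDerivWithinAt)
  have h0mem : (0:ℝ) ∈ Icc (-ℓ) ℓ := ⟨by linarith, hℓ.le⟩
  have hv0 := hvconst 0 h0mem
  rw [hv_def] at hv0
  simp only [hbcL, zero_mul] at hv0
  have hu0 : u 0 = 0 := by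
    have hexp : Real.exp (-(A 0)) ≠ 0 := (Real.exp_pos _).ne'
    exact (mul_eq_zero.mp hv0).resolve_right hexp
  exact absurd hu0 (hpos 0 ⟨by linarith, hℓ⟩).ne'
end

section
/- Let f : ℝ → ℝ satisfy f'' ≥ c₀ > 0, and let u₊ < u₋ with f(u₊) = f(u₋). Define Φ(κ) = ∫_{u₊}^{u₋} ds/(κ − f(s)) for κ > max_{s∈[u₊,u₋]} f(s) = f(u₊). Then Φ is strictly decreasing on (f(u₊), ∞), Φ(κ) → 0 as κ → +∞, and Φ(κ) → +∞ as κ → f(u₊)⁺. Consequently, for any L > 0 there is a unique κ with Φ(κ) = L. -/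
open Set intervalIntegral Filter

/-- Properties of `Φ(κ) = ∫_{u₊}^{u₋} ds/(κ - f(s))`: it is strictly decreasing on
`(f(u₊), ∞)`, tends to `0` at `+∞` and to `+∞` as `κ → f(u₊)⁺`; hence for every
`L > 0` there is a unique `κ > f(u₊)` with `Φ(κ) = L`. -/
theorem Phi_properties
    (f : ℝ → ℝ) (c₀ : ℝ) (hc₀ : 0 < c₀)
    (hf : ContDiff ℝ 2 f)
    (hconv : ∀ s, c₀ ≤ deriv (deriv f) s)
    (up um : ℝ) (hlt : up < um) (hfeq : f up = f um)
    (hfp : deriv f up < 0) (hfm : 0 < deriv f um) :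
    StrictAntiOn (fun κ => ∫ s in up..um, 1 / (κ - f s)) (Ioi (f up)) ∧
    Tendsto (fun κ => ∫ s in up..um, 1 / (κ - f s)) atTop (nhds 0) ∧
    Tendsto (fun κ => ∫ s in up..um, 1 / (κ - f s))
      (nhdsWithin (f up) (Ioi (f up))) atTop ∧
    ∀ L : ℝ, 0 < L → ∃! κ : ℝ, κ ∈ Ioi (f up) ∧
      (∫ s in up..um, 1 / (κ - f s)) = L := by
  have h2 : Differentiable ℝ f ∧ ContDiff ℝ 1 (deriv f) := by
    rw [show (2 : WithTop ℕ∞) = 1 + 1 by norm_num, contDiff_succ_iff_deriv] at hf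
    exact ⟨hf.1, hf.2.2⟩
  obtain ⟨hdiff, hderiv1⟩ := h2
  have hcont : Continuous f := hdiff.continuous
  have hdcont : Continuous (deriv f) := hderiv1.continuous
  -- convexity
  have hconvex : ConvexOn ℝ univ f := by
    refine convexOn_of_deriv2_nonneg convex_univ hcont.continuousOn
      hdiff.differentiableOn ((hderiv1.differentiable one_ne_zero).differentiableOn) ?_
    intro x _
    simpa [Function.iterate_succ] using (hc₀.trans_le (hconv x)).le
  have hfle : ∀ s ∈ Icc up um, f s ≤ f up := by
    intro s hs
    have := hconvex.le_max_of_mem_Icc (mem_univ up) (mem_univ um) hs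
    rwa [← hfeq, max_self] at this
  set Φ : ℝ → ℝ := fun κ => ∫ s in up..um, 1 / (κ - f s) with hΦ
  have hposd : ∀ {κ : ℝ}, κ ∈ Ioi (f up) → ∀ s ∈ Icc up um, 0 < κ - f s := by
    intro κ hκ s hs
    have h1 := hfle s hs
    have h2 : f up < κ := hκ
    linarith
  have hcontOn : ∀ {κ : ℝ}, κ ∈ Ioi (f up) →
      ContinuousOn (fun s => 1 / (κ - f s)) (Icc up um) := by
    intro κ hκ
    exact continuousOn_const.div ((continuous_const.sub hcont).continuousOn)
      (fun s hs => (hposd hκ s hs).ne')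
  have hint : ∀ {κ : ℝ}, κ ∈ Ioi (f up) →
      IntervalIntegrable (fun s => 1 / (κ - f s)) MeasureTheory.volume up um :=
    fun hκ => (hcontOn hκ).intervalIntegrable_of_Icc hlt.le
  -- Part 1 : strict antitonicity
  have hanti : StrictAntiOn Φ (Ioi (f up)) := by
    intro a ha b hb hab
    apply integral_lt_integral_of_continuousOn_of_le_of_exists_lt hlt (hcontOn hb) (hcontOn ha)
    · intro x hx
      have hx' : x ∈ Icc up um := ⟨hx.1.le, hx.2⟩
      have h1 := hposd ha x hx'
      exact one_div_le_one_div_of_le h1 (by linarith)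
    · refine ⟨up, left_mem_Icc.2 hlt.le, ?_⟩
      have h1 := hposd ha up (left_mem_Icc.2 hlt.le)
      exact one_div_lt_one_div_of_lt h1 (by linarith)
  -- Part 2 : tends to 0 at +∞
  have htop : Tendsto Φ atTop (nhds 0) := by
    have hlb : ∀ᶠ κ in atTop, 0 ≤ Φ κ := by
      filter_upwards [eventually_gt_atTop (f up)] with κ hκ
      apply intervalIntegral.integral_nonneg hlt.le
      exact fun s hs => one_div_nonneg.2 (hposd hκ s hs).le
    have hbound : ∀ᶠ κ in atTop, Φ κ ≤ (um - up) * (1 / (κ - f up)) := by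
      filter_upwards [eventually_gt_atTop (f up)] with κ hκ
      have h := intervalIntegral.integral_mono_on hlt.le (hint hκ)
        intervalIntegrable_const
        (fun s hs => one_div_le_one_div_of_le (sub_pos.2 hκ)
          (by linarith [hfle s hs]))
      rw [intervalIntegral.integral_const, smul_eq_mul] at h
      exact h
    have hup : Tendsto (fun κ : ℝ => (um - up) * (1 / (κ - f up))) atTop (nhds 0) := by
      have h1 : Tendsto (fun κ : ℝ => κ - f up) atTop atTop :=
        Tendsto.congr (fun x => by simp only [id_eq]; ring)
          (tendsto_atTop_add_const_right atTop (-(f up)) tendsto_id)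
      have h2 := h1.inv_tendsto_atTop.const_mul (um - up)
      rw [mul_zero] at h2
      simp only [one_div]
      exact h2
    exact tendsto_of_tendsto_of_tendsto_of_le_of_le' tendsto_const_nhds hup hlb hbound
  -- Lipschitz bound
  obtain ⟨C, hC⟩ := isCompact_Icc.exists_bound_of_continuousOn
    (hdcont.continuousOn : ContinuousOn (deriv f) (Icc up um))
  set C' : ℝ := C + 1 with hC'
  have hC'pos : 0 < C' := by
    have := (norm_nonneg (deriv f up)).trans (hC up (left_mem_Icc.2 hlt.le))
    simp only [hC']; linarith
  have hLip : ∀ s ∈ Icc up um, f up - f s ≤ C' * (s - up) := by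
    intro s hs
    have h := Convex.norm_image_sub_le_of_norm_deriv_le (C := C + 1)
      (fun x _ => hdiff x) (fun x hx => (hC x hx).trans (by linarith))
      (convex_Icc up um) hs (left_mem_Icc.2 hlt.le)
    rw [← hC'] at h
    rw [Real.norm_eq_abs, Real.norm_eq_abs] at h
    have h1 : f up - f s ≤ |f up - f s| := le_abs_self _
    have h2 : |up - s| = s - up := by
      rw [abs_sub_comm]; exact abs_of_nonneg (by linarith [hs.1])
    rw [h2] at h
    linarith
  -- the explicit lower bound
  set g : ℝ → ℝ := fun κ =>
    (1 / C') * (Real.log ((κ - f up) + C' * (um - up)) - Real.log (κ - f up)) with hg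
  have hargpos : ∀ κ ∈ Ioi (f up), ∀ s ∈ Icc up um,
      0 < (κ - f up) + C' * (s - up) := by
    intro κ hκ s hs
    have h1 : f up < κ := hκ
    have h2 : 0 ≤ C' * (s - up) := mul_nonneg hC'pos.le (by linarith [hs.1])
    linarith
  have hcalc : ∀ κ ∈ Ioi (f up),
      (∫ s in up..um, 1 / ((κ - f up) + C' * (s - up))) = g κ := by
    intro κ hκ
    have hFTC := intervalIntegral.integral_eq_sub_of_hasDerivAt
      (f := fun s => (1 / C') * Real.log ((κ - f up) + C' * (s - up)))
      (f' := fun s => 1 / ((κ - f up) + C' * (s - up))) (a := up) (b := um) ?_ ?_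
    · rw [hFTC]
      simp only [hg]
      rw [show κ - f up + C' * (up - up) = κ - f up by ring]
      ring
    · intro s hs
      rw [uIcc_of_le hlt.le] at hs
      have harg := hargpos κ hκ s hs
      have h1 : HasDerivAt (fun s : ℝ => (κ - f up) + C' * (s - up)) C' s := by
        simpa using HasDerivAt.const_add (κ - f up)
          (HasDerivAt.const_mul C' ((hasDerivAt_id s).sub_const up))
      have h2 : HasDerivAt (fun s : ℝ => Real.log ((κ - f up) + C' * (s - up)))
          (((κ - f up) + C' * (s - up))⁻¹ * C') s :=
        by have := (Real.hasDerivAt_log harg.ne').comp s h1; exact this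
      have h3 := HasDerivAt.const_mul (1 / C') h2
      have heq : (1 / C') * (((κ - f up) + C' * (s - up))⁻¹ * C')
          = 1 / ((κ - f up) + C' * (s - up)) := by field_simp
      simpa only [heq] using h3
    · apply ContinuousOn.intervalIntegrable
      rw [uIcc_of_le hlt.le]
      exact continuousOn_const.div
        (continuousOn_const.add ((continuous_const.mul
          (continuous_id.sub continuous_const)).continuousOn))
        (fun s hs => (hargpos κ hκ s hs).ne')
  have hΦge : ∀ κ ∈ Ioi (f up), g κ ≤ Φ κ := by
    intro κ hκ
    rw [← hcalc κ hκ]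
    apply intervalIntegral.integral_mono_on hlt.le
    · apply ContinuousOn.intervalIntegrable
      rw [uIcc_of_le hlt.le]
      exact continuousOn_const.div
        (continuousOn_const.add ((continuous_const.mul
          (continuous_id.sub continuous_const)).continuousOn))
        (fun s hs => (hargpos κ hκ s hs).ne')
    · exact hint hκ
    · intro s hs
      apply one_div_le_one_div_of_le (hposd hκ s hs)
      have := hLip s hs
      linarith
  -- Part 3 : blow-up at f up
  have hatTop : Tendsto Φ (nhdsWithin (f up) (Ioi (f up))) atTop := by
    have hε : Tendsto (fun κ : ℝ => κ - f up) (nhdsWithin (f up) (Ioi (f up)))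
        (nhdsWithin 0 (Ioi 0)) := by
      apply tendsto_nhdsWithin_of_tendsto_nhds_of_eventually_within
      · have h1 : Tendsto (fun κ : ℝ => κ - f up) (nhds (f up)) (nhds (f up - f up)) :=
          (continuous_id.sub continuous_const).tendsto (f up)
        rw [sub_self] at h1
        exact h1.mono_left nhdsWithin_le_nhds
      · filter_upwards [self_mem_nhdsWithin] with κ hκ
        exact sub_pos.2 (mem_Ioi.1 hκ)
    have hlogb : Tendsto (fun κ : ℝ => -Real.log (κ - f up))
        (nhdsWithin (f up) (Ioi (f up))) atTop :=
      tendsto_neg_atBot_atTop.comp (Real.tendsto_log_nhdsGT_zero.comp hε)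
    have hloga : Tendsto (fun κ : ℝ => Real.log ((κ - f up) + C' * (um - up)))
        (nhdsWithin (f up) (Ioi (f up))) (nhds (Real.log (C' * (um - up)))) := by
      have hin : Tendsto (fun κ : ℝ => (κ - f up) + C' * (um - up))
          (nhdsWithin (f up) (Ioi (f up))) (nhds (C' * (um - up))) := by
        have h1 : Tendsto (fun κ : ℝ => (κ - f up) + C' * (um - up)) (nhds (f up))
            (nhds ((f up - f up) + C' * (um - up))) :=
          ((continuous_id.sub continuous_const).add continuous_const).tendsto (f up)
        rw [sub_self, zero_add] at h1
        exact h1.mono_left nhdsWithin_le_nhds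
      have hpos : (0:ℝ) < C' * (um - up) := mul_pos hC'pos (by linarith)
      exact (Real.continuousAt_log hpos.ne').tendsto.comp hin
    have hgtop : Tendsto g (nhdsWithin (f up) (Ioi (f up))) atTop := by
      have h1 := hloga.add_atTop hlogb
      have h2 := h1.const_mul_atTop (show (0:ℝ) < 1 / C' by positivity)
      simpa [hg, sub_eq_add_neg] using h2
    apply tendsto_atTop_mono' _ _ hgtop
    filter_upwards [self_mem_nhdsWithin] with κ hκ
    exact hΦge κ hκ
  -- continuity of Φ
  have hcontPhi : ∀ κ₀ ∈ Ioi (f up), ContinuousAt Φ κ₀ := by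
    intro κ₀ hκ₀
    have hκ₀' : f up < κ₀ := hκ₀
    have hδ : 0 < (κ₀ - f up) / 2 := by linarith
    have hball : ∀ᶠ κ in nhds κ₀, f up + (κ₀ - f up) / 2 < κ :=
      eventually_gt_nhds (by linarith)
    apply intervalIntegral.continuousAt_of_dominated_interval
      (bound := fun _ => 1 / ((κ₀ - f up) / 2))
    · filter_upwards [hball] with κ hκ
      have hκm : κ ∈ Ioi (f up) := by simp only [mem_Ioi]; linarith
      rw [uIoc_of_le hlt.le]
      exact ((hcontOn hκm).mono Ioc_subset_Icc_self).aestronglyMeasurable measurableSet_Ioc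
    · filter_upwards [hball] with κ hκ
      apply MeasureTheory.ae_of_all
      intro t ht
      rw [uIoc_of_le hlt.le] at ht
      have ht' : t ∈ Icc up um := Ioc_subset_Icc_self ht
      have h1 : (κ₀ - f up) / 2 < κ - f t := by
        have := hfle t ht'
        linarith
      have h0 : 0 < 1 / (κ - f t) := one_div_pos.2 (by linarith)
      rw [Real.norm_eq_abs, abs_of_pos h0]
      exact one_div_le_one_div_of_le hδ h1.le
    · exact intervalIntegrable_const
    · apply MeasureTheory.ae_of_all
      intro t ht
      rw [uIoc_of_le hlt.le] at ht
      have ht' : t ∈ Icc up um := Ioc_subset_Icc_self ht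
      have hne : κ₀ - f t ≠ 0 := by
        have := hfle t ht'
        intro h; apply absurd h; intro h'; linarith [sub_eq_zero.mp h']
      exact ContinuousAt.div continuousAt_const
        (continuousAt_id.sub continuousAt_const) hne
  refine ⟨hanti, htop, hatTop, ?_⟩
  intro L hL
  obtain ⟨κ₂, hκ₂v, hκ₂m⟩ : ∃ κ₂, Φ κ₂ < L ∧ f up < κ₂ :=
    (((tendsto_order.1 htop).2 L hL).and (eventually_gt_atTop (f up))).exists
  obtain ⟨κ₁, hκ₁v, hκ₁m⟩ : ∃ κ₁, L < Φ κ₁ ∧ f up < κ₁ := by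
    have h1 : ∀ᶠ κ in nhdsWithin (f up) (Ioi (f up)), L < Φ κ :=
      hatTop.eventually (eventually_gt_atTop L)
    exact (h1.and (eventually_mem_nhdsWithin.mono fun κ hκ => hκ)).exists
  have hord : κ₁ < κ₂ := by
    by_contra h
    push_neg at h
    rcases eq_or_lt_of_le h with h' | h'
    · rw [h'] at hκ₂v; linarith
    · have := hanti (mem_Ioi.2 hκ₂m) (mem_Ioi.2 hκ₁m) h'
      linarith
  have hcms : ContinuousOn Φ (Icc κ₁ κ₂) := fun x hx =>
    (hcontPhi x (mem_Ioi.2 (lt_of_lt_of_le hκ₁m hx.1))).continuousWithinAt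
  obtain ⟨κ, hκmem, hκval⟩ := intermediate_value_Icc' hord.le hcms ⟨hκ₂v.le, hκ₁v.le⟩
  have hκIoi : κ ∈ Ioi (f up) := mem_Ioi.2 (lt_of_lt_of_le hκ₁m hκmem.1)
  refine ⟨κ, ⟨hκIoi, hκval⟩, ?_⟩
  rintro y ⟨hy, hyval⟩
  refine hanti.injOn hy hκIoi ?_
  rw [hκval]
  exact hyval
end
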